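/- Let P be a row-stochastic matrix on a nonempty finite type S and let s be a state that is recurrent for P. Then there exists a pmf π on S that is stationary for P (∑_t π t * P t t' = π t' for all t'), with π s > 0 and with the support of π contained in the set of states reachable from s. -/

import Mathlib

open MeasureTheory Filter Finset

noncomputable section

def IsPmf {A : Type*} [Fintype A] (p : A → ℝ) : Prop :=
  (∀ a, 0 ≤ p a) ∧ ∑ a, p a = 1

noncomputable def entropy {A : Type*} [Fintype A] (p : A → ℝ) : ℝ :=
  -∑ a, p a * Real.log (p a)

def IsStochastic {S : Type*} [Fintype S] (P : S → S → ℝ) : Prop :=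
  (∀ s s', 0 ≤ P s s') ∧ ∀ s, ∑ s', P s s' = 1

/-- The `n`-th binary digit of `ω`, as a real number `0` or `1`. -/
def bitAt (ω : ℝ) (n : ℕ) : ℝ := if ⌊ω * 2 ^ (n + 1)⌋ % 2 = 1 then 1 else 0

/-- A sequence of i.i.d. uniform random variables on `[0,1)`, extracted from the binary
digits of a single uniform sample `ω ∈ [0,1)` by interleaving. -/
noncomputable def unifAt (ω : ℝ) (k : ℕ) : ℝ := ∑' n : ℕ, bitAt ω (Nat.pair k n) / 2 ^ (n + 1)

/-- CDF-inversion step function: given row `P s` and `x ∈ [0,1)`, produce the next state. -/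
noncomputable def stepFun {S : Type*} [Fintype S] [Nonempty S] (P : S → S → ℝ) (s : S) (x : ℝ) : S :=
  (Fintype.equivFin S).symm
    (@dite _ (∃ k, x < ∑ j ∈ Finset.Iic k, P s ((Fintype.equivFin S).symm j))
      (Classical.propDecidable _)
      (fun h => @Fin.find _ (fun i => x < ∑ j ∈ Finset.Iic i, P s ((Fintype.equivFin S).symm j))
        (Classical.decPred _) h)
      (fun _ => ⟨0, Fintype.card_pos⟩))

/-- The trajectory of the Markov chain with transition matrix `P` started at `s0`,
driven by the i.i.d. uniforms extracted from `ω`. -/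
noncomputable def trajFun {S : Type*} [Fintype S] [Nonempty S] (P : S → S → ℝ) (s0 : S) (ω : ℝ) :
    ℕ → S
  | 0 => s0
  | k + 1 => stepFun P (trajFun P s0 ω k) (unifAt ω k)

/-- The law `μ_{s0}` of the time-homogeneous Markov chain with transition matrix `P`
started at `s0`, as a measure on path space `ℕ → S` (each copy of `S` carrying the
discrete σ-algebra `⊤`). -/
noncomputable def chainLaw {S : Type*} [Fintype S] [Nonempty S] (P : S → S → ℝ) (s0 : S) :
    @Measure (ℕ → S) (@MeasurableSpace.pi ℕ (fun _ => S) (fun _ => ⊤)) :=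
  @Measure.map ℝ (ℕ → S) _ (@MeasurableSpace.pi ℕ (fun _ => S) (fun _ => ⊤))
    (trajFun P s0) (volume.restrict (Set.Ico (0 : ℝ) 1))

/-- `s` is recurrent for `P`: the chain started at `s` returns to `s` with probability one. -/
def Recurrent {S : Type*} [Fintype S] [Nonempty S] (P : S → S → ℝ) (s : S) : Prop :=
  chainLaw P s {x | ∃ k ≥ 1, x k = s} = 1

/-- `t` is reachable from `s` under `P`: some `n`-step transition probability is positive. -/
def Reachable {S : Type*} [Fintype S] [DecidableEq S] (P : S → S → ℝ) (s t : S) : Prop :=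
  ∃ n : ℕ, 0 < (Matrix.of P ^ n) s t

/-- A recurrent class of `P`: all states recurrent, mutually communicating, and closed. -/
def IsRecurrentClass {S : Type*} [Fintype S] [Nonempty S] [DecidableEq S]
    (P : S → S → ℝ) (C : Set S) : Prop :=
  (∀ s ∈ C, Recurrent P s) ∧
  (∀ s ∈ C, ∀ t ∈ C, Reachable P s t ∧ Reachable P t s) ∧
  (∀ s ∈ C, ∀ t, t ∉ C → P s t = 0)

def IsKernel {S U : Type*} [Fintype S] [Fintype U] (Q : S → U → S → ℝ) : Prop :=
  (∀ s u s', 0 ≤ Q s u s') ∧ ∀ s u, ∑ s', Q s u s' = 1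

def IsPolicy {S U : Type*} [Fintype U] (K : S → U → ℝ) : Prop :=
  (∀ s u, 0 ≤ K s u) ∧ ∀ s, ∑ u, K s u = 1

/-- Closed-loop transition matrix `P_K s s' = ∑_u K s u * Q s u s'`. -/
def closedLoop {S U : Type*} [Fintype U] (Q : S → U → S → ℝ) (K : S → U → ℝ) : S → S → ℝ :=
  fun s s' => ∑ u, K s u * Q s u s'

/-- Marginal on states of a pmf on `S × U`. -/
def marginalS {S U : Type*} [Fintype U] (f : S × U → ℝ) : S → ℝ := fun s => ∑ u, f (s, u)

/-- The feasible set `D(Q,F)`. -/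
def Feasible {S U : Type*} [Fintype S] [Fintype U] (Q : S → U → S → ℝ) (F : Set S)
    (f : S × U → ℝ) : Prop :=
  IsPmf f ∧ (∀ s' : S, marginalS f s' = ∑ s : S, ∑ u : U, Q s u s' * f (s, u)) ∧
  ∀ s ∈ F, marginalS f s = 0

/-- The policy induced by `f` (relative to a fixed policy `G`). -/
noncomputable def inducedPolicy {S U : Type*} [Fintype U] (G : S → U → ℝ) (f : S × U → ℝ) :
    S → U → ℝ :=
  fun s u => if 0 < marginalS f s then f (s, u) / marginalS f s else G s u

/-- The set `S^R_{K,F}` of `F`-safe recurrent states under policy `K`. -/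
def FSafeRecStates {S U : Type*} [Fintype S] [Nonempty S] [DecidableEq S] [Fintype U]
    (Q : S → U → S → ℝ) (F : Set S) (K : S → U → ℝ) : Set S :=
  {s | Recurrent (closedLoop Q K) s ∧
    ∀ t, Reachable (closedLoop Q K) s t → ∀ t' ∈ F, closedLoop Q K t t' = 0}

/-- The maximal set `S^R_F = ⋃_K S^R_{K,F}` of `F`-safe recurrent states. -/
def SRF {S U : Type*} [Fintype S] [Nonempty S] [DecidableEq S] [Fintype U]
    (Q : S → U → S → ℝ) (F : Set S) : Set S :=
  ⋃ K ∈ {K : S → U → ℝ | IsPolicy K}, FSafeRecStates Q F K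



-- ===== auxiliary lemmas =====

section Algebra

variable {S : Type*} [Fintype S] [DecidableEq S] {P : S → S → ℝ}

lemma pow_stochastic (hP : IsStochastic P) (n : ℕ) :
    (∀ a b, 0 ≤ (Matrix.of P ^ n) a b) ∧ ∀ a, ∑ b, (Matrix.of P ^ n) a b = 1 := by
  induction n with
  | zero =>
    constructor
    · intro a b; simp [Matrix.one_apply]; positivity
    · intro a; simp [Matrix.one_apply]
  | succ n ih =>
    constructor
    · intro a b
      rw [pow_succ, Matrix.mul_apply]
      exact Finset.sum_nonneg fun c _ => mul_nonneg (ih.1 a c) (hP.1 c b)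
    · intro a
      simp only [pow_succ, Matrix.mul_apply]
      rw [Finset.sum_comm]
      have : ∀ c : S, ∑ b : S, (Matrix.of P ^ n) a c * Matrix.of P c b = (Matrix.of P ^ n) a c := by
        intro c
        rw [← Finset.mul_sum]
        have := hP.2 c
        simp only [Matrix.of_apply]
        rw [this, mul_one]
      rw [Finset.sum_congr rfl fun c _ => this c, ih.2 a]

lemma pow_entry_le_one (hP : IsStochastic P) (n : ℕ) (a b : S) :
    (Matrix.of P ^ n) a b ≤ 1 := by
  have h := pow_stochastic hP n
  calc (Matrix.of P ^ n) a b ≤ ∑ c, (Matrix.of P ^ n) a c :=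
        Finset.single_le_sum (fun c _ => h.1 a c) (Finset.mem_univ b)
    _ = 1 := h.2 a

lemma reachable_trans (hP : IsStochastic P) {s t t' : S} (h1 : Reachable P s t)
    (h2 : Reachable P t t') : Reachable P s t' := by
  obtain ⟨n, hn⟩ := h1
  obtain ⟨m, hm⟩ := h2
  refine ⟨n + m, ?_⟩
  rw [pow_add, Matrix.mul_apply]
  have : 0 < (Matrix.of P ^ n) s t * (Matrix.of P ^ m) t t' := mul_pos hn hm
  calc (0:ℝ) < (Matrix.of P ^ n) s t * (Matrix.of P ^ m) t t' := this
    _ ≤ ∑ c, (Matrix.of P ^ n) s c * (Matrix.of P ^ m) c t' :=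
      Finset.single_le_sum (f := fun c => (Matrix.of P ^ n) s c * (Matrix.of P ^ m) c t')
        (fun c _ => mul_nonneg ((pow_stochastic hP n).1 s c) ((pow_stochastic hP m).1 c t'))
        (Finset.mem_univ t)

lemma reachable_refl (s : S) : Reachable P s s := by
  refine ⟨0, ?_⟩
  simp [Matrix.one_apply]

lemma reachable_of_pos {s t : S} (h : 0 < P s t) : Reachable P s t := by
  refine ⟨1, ?_⟩
  simpa using h

/-- extract a positive-probability path from a positive matrix power entry -/
lemma exists_path {n : ℕ} {a b : S} (hP : IsStochastic P) (h : 0 < (Matrix.of P ^ n) a b) :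
    ∃ u : ℕ → S, u 0 = a ∧ u n = b ∧ ∀ i < n, 0 < P (u i) (u (i + 1)) := by
  induction n generalizing b with
  | zero =>
    refine ⟨fun _ => a, rfl, ?_, by omega⟩
    simp only [pow_zero, Matrix.one_apply] at h
    by_contra hab
    rw [if_neg hab] at h
    exact lt_irrefl 0 h
  | succ n ih =>
    rw [pow_succ, Matrix.mul_apply] at h
    have : ∃ c : S, 0 < (Matrix.of P ^ n) a c * Matrix.of P c b := by
      by_contra hc
      push_neg at hc
      have : ∑ c, (Matrix.of P ^ n) a c * Matrix.of P c b ≤ 0 :=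
        Finset.sum_nonpos fun c _ => hc c
      linarith
    obtain ⟨c, hc⟩ := this
    simp only [Matrix.of_apply] at hc
    have hx := (pow_stochastic hP n).1 a c
    have hy := hP.1 c b
    have h1 : 0 < (Matrix.of P ^ n) a c := by nlinarith
    have h2 : 0 < P c b := by nlinarith
    obtain ⟨u, hu0, hun, hustep⟩ := ih h1
    refine ⟨fun i => if i ≤ n then u i else b, by simp [hu0], by simp, ?_⟩
    intro i hi
    rcases lt_or_eq_of_le (Nat.lt_succ_iff.mp hi) with h' | h'
    · simp only [show i ≤ n by omega, show i + 1 ≤ n from h', if_true]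
      exact hustep i h'
    · subst h'
      simp only [le_refl, if_true, show ¬ (i + 1 ≤ i) by omega, if_false]
      rwa [hun]

end Algebra


open Topology

section Cesaro

variable {S : Type*} [Fintype S] [DecidableEq S] {P : S → S → ℝ}

lemma exists_stationary (hP : IsStochastic P) (s : S) :
    ∃ π : S → ℝ, IsPmf π ∧ (∀ t' : S, ∑ t : S, π t * P t t' = π t') ∧
      ∀ t : S, 0 < π t → Reachable P s t := by
  classical
  set M := Matrix.of P with hM
  set v : ℕ → S → ℝ := fun N t => (∑ k ∈ Finset.range (N + 1), (M ^ k) s t) / (N + 1) with hv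
  have hvmem : ∀ N, v N ∈ Set.Icc (0 : S → ℝ) 1 := by
    intro N
    constructor
    · intro t
      apply div_nonneg
      · exact Finset.sum_nonneg fun k _ => (pow_stochastic hP k).1 s t
      · positivity
    · intro t
      simp only [Pi.one_apply, hv]
      rw [div_le_one (by positivity)]
      calc ∑ k ∈ Finset.range (N + 1), (M ^ k) s t ≤ ∑ k ∈ Finset.range (N + 1), 1 :=
            Finset.sum_le_sum fun k _ => pow_entry_le_one hP k s t
        _ = (N : ℝ) + 1 := by simp
  obtain ⟨π, hπmem, φ, hφ, hconv⟩ :=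
    (isCompact_Icc (a := (0 : S → ℝ)) (b := 1)).tendsto_subseq hvmem
  have hcoord : ∀ t, Tendsto (fun N => v (φ N) t) atTop (𝓝 (π t)) := by
    intro t
    exact (tendsto_pi_nhds.mp hconv) t
  have hsumv : ∀ N, ∑ t, v N t = 1 := by
    intro N
    simp only [hv]
    rw [← Finset.sum_div, Finset.sum_comm]
    rw [Finset.sum_congr rfl fun k (_ : k ∈ Finset.range (N+1)) => (pow_stochastic hP k).2 s]
    rw [Finset.sum_const, Finset.card_range, nsmul_eq_mul, mul_one]
    push_cast
    rw [div_self (by positivity)]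
  have hπ0 : ∀ t, 0 ≤ π t := fun t =>
    ge_of_tendsto' (hcoord t) fun N => (hvmem (φ N)).1 t
  have hπsum : ∑ t, π t = 1 := by
    have h1 : Tendsto (fun N => ∑ t, v (φ N) t) atTop (𝓝 (∑ t, π t)) :=
      tendsto_finset_sum _ fun t _ => hcoord t
    have h2 : Tendsto (fun N => ∑ t, v (φ N) t) atTop (𝓝 1) := by
      simp only [hsumv]
      exact tendsto_const_nhds
    exact tendsto_nhds_unique h1 h2
  have hkey : ∀ N t', ∑ t, v N t * P t t' =
      v N t' + ((M ^ (N + 1)) s t' - (M ^ 0) s t') / (N + 1) := by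
    intro N t'
    have step : ∀ k, ∑ t, (M ^ k) s t * P t t' = (M ^ (k + 1)) s t' := by
      intro k
      rw [pow_succ, Matrix.mul_apply]
      rfl
    have hshift : ∑ k ∈ Finset.range (N + 1), (M ^ (k + 1)) s t'
        = ∑ k ∈ Finset.range (N + 1), (M ^ k) s t' + ((M ^ (N + 1)) s t' - (M ^ 0) s t') := by
      have h1 := Finset.sum_range_succ' (fun k => (M ^ k) s t') (N + 1)
      have h2 := Finset.sum_range_succ (fun k => (M ^ k) s t') (N + 1)
      have h3 : ∑ k ∈ Finset.range (N + 1), (M ^ (k + 1)) s t'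
          = ∑ k ∈ Finset.range (N + 1 + 1), (M ^ k) s t' - (M ^ 0) s t' := by
        rw [h1]; ring
      rw [h3, h2]; ring
    calc ∑ t, v N t * P t t'
        = ∑ t, (∑ k ∈ Finset.range (N + 1), (M ^ k) s t * P t t') / (N + 1) := by
          refine Finset.sum_congr rfl fun t _ => ?_
          simp only [hv]
          rw [div_mul_eq_mul_div, Finset.sum_mul]
      _ = (∑ k ∈ Finset.range (N + 1), ∑ t, (M ^ k) s t * P t t') / (N + 1) := by
          rw [← Finset.sum_div, Finset.sum_comm]
      _ = (∑ k ∈ Finset.range (N + 1), (M ^ (k + 1)) s t') / (N + 1) := by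
          rw [Finset.sum_congr rfl fun k _ => step k]
      _ = v N t' + ((M ^ (N + 1)) s t' - (M ^ 0) s t') / (N + 1) := by
          rw [hshift, add_div]
  have hstat : ∀ t' : S, ∑ t : S, π t * P t t' = π t' := by
    intro t'
    have herr : Tendsto (fun N => ((M ^ (φ N + 1)) s t' - (M ^ 0) s t') / (φ N + 1))
        atTop (𝓝 0) := by
      have hbound : ∀ N : ℕ, ‖((M ^ (φ N + 1)) s t' - (M ^ 0) s t') / ((φ N : ℝ) + 1)‖
          ≤ 2 / ((N : ℝ) + 1) := by
        intro N
        have hb : |(M ^ (φ N + 1)) s t' - (M ^ 0) s t'| ≤ 2 := by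
          have h1 := (pow_stochastic hP (φ N + 1)).1 s t'
          have h2 := pow_entry_le_one hP (φ N + 1) s t'
          have h3 := (pow_stochastic hP 0).1 s t'
          have h4 := pow_entry_le_one hP 0 s t'
          rw [abs_le]; constructor <;> linarith
        have hN : (N : ℝ) + 1 ≤ (φ N : ℝ) + 1 := by
          have h := hφ.le_apply (x := N)
          have : (N : ℝ) ≤ (φ N : ℝ) := by exact_mod_cast h
          linarith
        rw [Real.norm_eq_abs, abs_div, abs_of_pos (by positivity : (0:ℝ) < (φ N : ℝ) + 1)]
        exact div_le_div₀ (by norm_num) hb (by positivity) hN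
      have htend : Tendsto (fun N : ℕ => 2 / ((N : ℝ) + 1)) atTop (𝓝 0) := by
        have h := tendsto_one_div_add_atTop_nhds_zero_nat.const_mul (2:ℝ)
        rw [mul_zero] at h
        simpa [mul_one_div, div_eq_mul_inv] using h
      exact squeeze_zero_norm hbound htend
    have hA : Tendsto (fun N => ∑ t, v (φ N) t * P t t') atTop (𝓝 (∑ t, π t * P t t')) :=
      tendsto_finset_sum _ fun t _ => (hcoord t).mul_const _
    have hB : Tendsto (fun N => ∑ t, v (φ N) t * P t t') atTop (𝓝 (π t' + 0)) := by
      simp only [hkey]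
      exact (hcoord t').add herr
    have := tendsto_nhds_unique hA hB
    rw [this, add_zero]
  refine ⟨π, ⟨hπ0, hπsum⟩, hstat, ?_⟩
  intro t ht
  by_contra hr
  have hzero : ∀ k, (M ^ k) s t = 0 := by
    intro k
    have := (pow_stochastic hP k).1 s t
    rcases this.lt_or_eq with h | h
    · exact absurd ⟨k, h⟩ hr
    · exact h.symm
  have hv0 : ∀ N, v N t = 0 := by
    intro N
    simp only [hv]
    rw [Finset.sum_congr rfl fun k _ => hzero k, Finset.sum_const, smul_zero, zero_div]
  have : π t = 0 := tendsto_nhds_unique (hcoord t) (by simp only [hv0]; exact tendsto_const_nhds)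
  linarith

end Cesaro

section Bits

open Topology

lemma bitAt_zero_or_one (ω : ℝ) (p : ℕ) : bitAt ω p = 0 ∨ bitAt ω p = 1 := by
  unfold bitAt; split <;> simp

lemma bitAt_eq_one_iff {ω : ℝ} {p : ℕ} : bitAt ω p = 1 ↔ ⌊ω * 2 ^ (p + 1)⌋ % 2 = 1 := by
  unfold bitAt; split <;> simp_all

lemma bitAt_eq_zero_iff {ω : ℝ} {p : ℕ} : bitAt ω p = 0 ↔ ⌊ω * 2 ^ (p + 1)⌋ % 2 = 0 := by
  unfold bitAt
  have := Int.emod_two_eq (⌊ω * 2 ^ (p + 1)⌋)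
  split <;> simp_all <;> omega

lemma two_pow_int_even (r : ℕ) (hr : 1 ≤ r) : (2:ℤ) ^ r % 2 = 0 := by
  have : (2:ℤ) ^ r = 2 * 2 ^ (r - 1) := by
    rw [← pow_succ']
    congr 1
    omega
  omega

/-- flipping a `1` bit down leaves all other bits unchanged -/
lemma bitAt_sub {ω : ℝ} {p : ℕ} (h : bitAt ω p = 1) (p' : ℕ) :
    bitAt (ω - ((2:ℝ) ^ (p + 1))⁻¹) p' = if p' = p then 0 else bitAt ω p' := by
  rw [bitAt_eq_one_iff] at h
  have h2pos : ∀ m : ℕ, (0:ℝ) < 2 ^ m := fun m => by positivity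
  rcases lt_trichotomy p' p with hlt | heq | hgt
  · -- p' < p : floor is unchanged
    rw [if_neg hlt.ne]
    set x := ω * 2 ^ (p' + 1) with hxdef
    set r := p - p' with hrdef
    have hr1 : 1 ≤ r := by omega
    have hpow : (2:ℝ) ^ (p + 1) = 2 ^ (p' + 1) * 2 ^ r := by
      rw [← pow_add]; congr 1; omega
    have hx2 : ω * 2 ^ (p + 1) = x * 2 ^ r := by
      rw [hxdef, hpow]; ring
    have hfl : ⌊x * (2:ℝ) ^ r⌋ = ⌊x⌋ * 2 ^ r + ⌊Int.fract x * 2 ^ r⌋ := by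
      have hx : x * (2:ℝ) ^ r = Int.fract x * 2 ^ r + ((⌊x⌋ * 2 ^ r : ℤ) : ℝ) := by
        have hfl := Int.fract_add_floor x
        push_cast
        linear_combination ((2:ℝ) ^ r) * hfl.symm
      rw [hx, Int.floor_add_intCast]
      ring
    have hodd2 : ⌊Int.fract x * (2:ℝ) ^ r⌋ % 2 = 1 := by
      rw [hx2] at h
      rw [hfl] at h
      have he := two_pow_int_even r hr1
      have hA : ⌊x⌋ * (2:ℤ) ^ r % 2 = 0 := by
        rw [Int.mul_emod, he]
        simp
      omega
    have h0 : (0:ℤ) ≤ ⌊Int.fract x * (2:ℝ) ^ r⌋ :=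
      Int.floor_nonneg.mpr (mul_nonneg (Int.fract_nonneg x) (le_of_lt (h2pos r)))
    have h1le : (1:ℝ) ≤ Int.fract x * 2 ^ r := by
      have : (1:ℤ) ≤ ⌊Int.fract x * (2:ℝ) ^ r⌋ := by omega
      exact_mod_cast Int.le_floor.mp this
    have hfr : ((2:ℝ) ^ r)⁻¹ ≤ Int.fract x := by
      rw [inv_eq_one_div, div_le_iff₀ (h2pos r)]
      linarith
    have hfloor : ⌊x - ((2:ℝ) ^ r)⁻¹⌋ = ⌊x⌋ := by
      have hfx : Int.fract x = x - ⌊x⌋ := (Int.self_sub_floor x).symm ▸ rfl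
      rw [Int.floor_eq_iff]
      constructor
      · have := Int.fract_nonneg x
        nlinarith [Int.floor_le x]
      · have := Int.lt_floor_add_one x
        have hinvpos : (0:ℝ) < ((2:ℝ) ^ r)⁻¹ := by positivity
        push_cast
        linarith
    have harg : (ω - ((2:ℝ) ^ (p + 1))⁻¹) * 2 ^ (p' + 1) = x - ((2:ℝ) ^ r)⁻¹ := by
      rw [hxdef, hpow]
      field_simp
    unfold bitAt
    rw [harg, hfloor]
  · -- p' = p : bit flips to 0
    subst heq
    rw [if_pos rfl]
    have harg : (ω - ((2:ℝ) ^ (p' + 1))⁻¹) * 2 ^ (p' + 1) = ω * 2 ^ (p' + 1) - ((1:ℤ):ℝ) := by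
      push_cast
      field_simp
    unfold bitAt
    rw [harg, Int.floor_sub_intCast]
    rw [if_neg (by omega)]
  · -- p' > p : floor shifts by an even integer
    rw [if_neg hgt.ne']
    have hpow : (2:ℝ) ^ (p' + 1) = 2 ^ (p + 1) * 2 ^ (p' - p) := by
      rw [← pow_add]; congr 1; omega
    have harg : (ω - ((2:ℝ) ^ (p + 1))⁻¹) * 2 ^ (p' + 1)
        = ω * 2 ^ (p' + 1) - (((2:ℤ) ^ (p' - p) : ℤ) : ℝ) := by
      rw [hpow]
      push_cast
      field_simp
    unfold bitAt
    rw [harg, Int.floor_sub_intCast]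
    have he := two_pow_int_even (p' - p) (by omega)
    congr 1
    simp only [eq_iff_iff]
    omega

/-- flipping a `0` bit up leaves all other bits unchanged -/
lemma bitAt_add {ω : ℝ} {p : ℕ} (h : bitAt ω p = 0) (p' : ℕ) :
    bitAt (ω + ((2:ℝ) ^ (p + 1))⁻¹) p' = if p' = p then 1 else bitAt ω p' := by
  rw [bitAt_eq_zero_iff] at h
  have hbit : bitAt (ω + ((2:ℝ) ^ (p + 1))⁻¹) p = 1 := by
    rw [bitAt_eq_one_iff]
    have harg : (ω + ((2:ℝ) ^ (p + 1))⁻¹) * 2 ^ (p + 1) = ω * 2 ^ (p + 1) + ((1:ℤ):ℝ) := by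
      push_cast
      field_simp
    rw [harg, Int.floor_add_intCast]
    omega
  have := bitAt_sub hbit p'
  rw [add_sub_cancel_right] at this
  rcases eq_or_ne p' p with hpp | hpp
  · subst hpp
    rwa [if_pos rfl]
  · rw [if_neg hpp] at this ⊢
    exact this.symm

end Bits

section BitMeasure

open Topology MeasureTheory

lemma measurable_bitAt (p : ℕ) : Measurable fun ω : ℝ => bitAt ω p := by
  unfold bitAt
  apply Measurable.ite _ measurable_const measurable_const
  have h1 : Measurable fun ω : ℝ => ⌊ω * 2 ^ (p + 1)⌋ :=
    Int.measurable_floor.comp (measurable_id.mul_const _)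
  exact h1 ((Set.to_countable {z : ℤ | z % 2 = 1}).measurableSet)

lemma measurable_bitSet (F : Finset ℕ) (ε : ℕ → ℝ) :
    MeasurableSet {ω : ℝ | ∀ p ∈ F, bitAt ω p = ε p} := by
  have : {ω : ℝ | ∀ p ∈ F, bitAt ω p = ε p} = ⋂ p ∈ F, {ω | bitAt ω p = ε p} := by
    ext ω; simp
  rw [this]
  exact MeasurableSet.biInter F.countable_toSet fun p _ =>
    (measurable_bitAt p) (measurableSet_singleton (ε p))

lemma volume_bitSet (F : Finset ℕ) (ε : ℕ → ℝ) (hε : ∀ p, ε p = 0 ∨ ε p = 1) :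
    volume (Set.Ico (0:ℝ) 1 ∩ {ω : ℝ | ∀ p ∈ F, bitAt ω p = ε p})
      = (1/2 : ENNReal) ^ F.card := by
  classical
  induction F using Finset.induction_on with
  | empty =>
    simp [Real.volume_Ico]
  | @insert p F hpF ih =>
    have h2pos : (0:ℝ) < 2 ^ (p + 1) := by positivity
    set δ : ℝ := ((2:ℝ) ^ (p + 1))⁻¹ with hδ
    have hδpos : 0 < δ := by positivity
    have hδmul : δ * 2 ^ (p + 1) = 1 := inv_mul_cancel₀ (ne_of_gt h2pos)
    set B := Set.Ico (0:ℝ) 1 ∩ {ω : ℝ | ∀ q ∈ F, bitAt ω q = ε q} with hB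
    set A0 := B ∩ {ω : ℝ | bitAt ω p = 0} with hA0def
    set A1 := B ∩ {ω : ℝ | bitAt ω p = 1} with hA1def
    have hev2 : (2:ℤ) ^ (p + 1) % 2 = 0 := two_pow_int_even (p + 1) (by omega)
    have hkey : ∀ ω : ℝ, ω ∈ A0 ↔ ω + δ ∈ A1 := by
      intro ω
      constructor
      · rintro ⟨⟨⟨hω0, hω1⟩, hbF⟩, hb0⟩
        have hb0' : bitAt ω p = 0 := hb0
        have hadd := bitAt_add hb0'
        have heven := bitAt_eq_zero_iff.mp hb0'
        have hfloor_lt : ⌊ω * 2 ^ (p + 1)⌋ < 2 ^ (p + 1) := by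
          rw [Int.floor_lt]
          push_cast
          nlinarith
        have hle : ⌊ω * 2 ^ (p + 1)⌋ ≤ 2 ^ (p + 1) - 2 := by omega
        have hle' : (⌊ω * 2 ^ (p + 1)⌋ : ℝ) ≤ 2 ^ (p + 1) - 2 := by exact_mod_cast hle
        have hlt1 : ω * 2 ^ (p + 1) + 1 < 2 ^ (p + 1) := by
          have := Int.lt_floor_add_one (ω * 2 ^ (p + 1))
          linarith
        have hωδ1 : ω + δ < 1 := by nlinarith
        refine ⟨⟨⟨by positivity, hωδ1⟩, ?_⟩, ?_⟩
        · intro q hq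
          have := hadd q
          rw [if_neg (by rintro rfl; exact hpF hq)] at this
          rw [this]
          exact hbF q hq
        · have := hadd p
          rwa [if_pos rfl] at this
      · rintro ⟨⟨⟨h0, h1⟩, hbF⟩, hb1⟩
        have hb1' : bitAt (ω + δ) p = 1 := hb1
        have hsub := bitAt_sub hb1'
        rw [add_sub_cancel_right] at hsub
        have hodd := bitAt_eq_one_iff.mp hb1'
        have hfl0 : (0:ℤ) ≤ ⌊(ω + δ) * 2 ^ (p + 1)⌋ :=
          Int.floor_nonneg.mpr (mul_nonneg h0 (le_of_lt h2pos))
        have h1le : (1:ℝ) ≤ (ω + δ) * 2 ^ (p + 1) := by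
          have : (1:ℤ) ≤ ⌊(ω + δ) * 2 ^ (p + 1)⌋ := by omega
          exact_mod_cast Int.le_floor.mp this
        refine ⟨⟨⟨by nlinarith, by nlinarith⟩, ?_⟩, ?_⟩
        · intro q hq
          have := hsub q
          rw [if_neg (by rintro rfl; exact hpF hq)] at this
          rw [this]
          exact hbF q hq
        · have := hsub p
          rwa [if_pos rfl] at this
    have hpre : A0 = (fun ω => ω + δ) ⁻¹' A1 := Set.ext fun ω => hkey ω
    have hvol01 : volume A0 = volume A1 := by
      rw [hpre]
      exact measure_preimage_add_right volume δ A1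
    have hmeasB : MeasurableSet B := measurableSet_Ico.inter (measurable_bitSet F ε)
    have hmeas1 : MeasurableSet A1 :=
      hmeasB.inter ((measurable_bitAt p) (measurableSet_singleton 1))
    have hunion : A0 ∪ A1 = B := by
      ext ω
      constructor
      · rintro (⟨h, _⟩ | ⟨h, _⟩) <;> exact h
      · intro h
        rcases bitAt_zero_or_one ω p with h0 | h1
        exacts [Or.inl ⟨h, h0⟩, Or.inr ⟨h, h1⟩]
    have hdisj : Disjoint A0 A1 := by
      rw [Set.disjoint_left]
      rintro ω ⟨_, h0⟩ ⟨_, h1⟩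
      have h0' : bitAt ω p = 0 := h0
      have h1' : bitAt ω p = 1 := h1
      rw [h0'] at h1'
      norm_num at h1'
    have hsum : volume A1 + volume A1 = (1/2 : ENNReal) ^ F.card := by
      rw [← ih, ← hunion, measure_union hdisj hmeas1, hvol01]
    have hhalf : (1/2 : ENNReal) ^ (F.card + 1) + (1/2 : ENNReal) ^ (F.card + 1)
        = (1/2 : ENNReal) ^ F.card := by
      rw [pow_succ, ← mul_add]
      have : (1/2 : ENNReal) + 1/2 = 1 := ENNReal.add_halves 1
      rw [this, mul_one]
    have hvolA1 : volume A1 = (1/2 : ENNReal) ^ (F.card + 1) := by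
      have e1 : volume A1 = (1/2 : ENNReal) ^ F.card / 2 :=
        (ENNReal.eq_div_iff two_ne_zero (by norm_num)).mpr (by rw [two_mul]; exact hsum)
      have e2 : (1/2 : ENNReal) ^ (F.card + 1) = (1/2 : ENNReal) ^ F.card / 2 :=
        (ENNReal.eq_div_iff two_ne_zero (by norm_num)).mpr (by rw [two_mul]; exact hhalf)
      rw [e1, ← e2]
    have hcard : (insert p F).card = F.card + 1 := Finset.card_insert_of_notMem hpF
    rw [hcard]
    rcases hε p with h0 | h1
    · have hTeq : Set.Ico (0:ℝ) 1 ∩ {ω : ℝ | ∀ q ∈ insert p F, bitAt ω q = ε q} = A0 := by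
        rw [hA0def, hB]
        ext ω
        simp only [Set.mem_inter_iff, Set.mem_setOf_eq, Finset.forall_mem_insert, h0]
        tauto
      rw [hTeq, hvol01, hvolA1]
    · have hTeq : Set.Ico (0:ℝ) 1 ∩ {ω : ℝ | ∀ q ∈ insert p F, bitAt ω q = ε q} = A1 := by
        rw [hA1def, hB]
        ext ω
        simp only [Set.mem_inter_iff, Set.mem_setOf_eq, Finset.forall_mem_insert, h1]
        tauto
      rw [hTeq, hvolA1]

end BitMeasure

section Unif

open Topology

lemma bitAt_nonneg (ω : ℝ) (p : ℕ) : 0 ≤ bitAt ω p := by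
  rcases bitAt_zero_or_one ω p with h | h <;> rw [h] <;> norm_num

lemma bitAt_le_one (ω : ℝ) (p : ℕ) : bitAt ω p ≤ 1 := by
  rcases bitAt_zero_or_one ω p with h | h <;> rw [h] <;> norm_num

lemma summable_half_pow : Summable fun n : ℕ => (1:ℝ) / 2 ^ (n + 1) := by
  have h : Summable fun n : ℕ => (1:ℝ) / 2 / 2 ^ n := by
    have := (summable_geometric_two).div_const 2
    exact this.congr fun n => by rw [div_pow, one_pow]; ring
  exact h.congr fun n => by rw [pow_succ]; ring

lemma tsum_half_pow : ∑' n : ℕ, (1:ℝ) / 2 ^ (n + 1) = 1 := by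
  have h := tsum_geometric_two' 1
  exact Eq.trans (tsum_congr fun n => by rw [pow_succ]; ring) h

lemma summable_bits (ω : ℝ) (g : ℕ → ℕ) :
    Summable fun n : ℕ => bitAt ω (g n) / 2 ^ (n + 1) := by
  apply Summable.of_nonneg_of_le
    (fun n => div_nonneg (bitAt_nonneg ω (g n)) (by positivity))
    (fun n => ?_) summable_half_pow
  gcongr
  exact bitAt_le_one _ _

lemma unifAt_nonneg (ω : ℝ) (k : ℕ) : 0 ≤ unifAt ω k := by
  unfold unifAt
  exact tsum_nonneg fun n => div_nonneg (bitAt_nonneg _ _) (by positivity)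

lemma unifAt_le_one (ω : ℝ) (k : ℕ) : unifAt ω k ≤ 1 := by
  unfold unifAt
  rw [← tsum_half_pow]
  apply Summable.tsum_le_tsum _ (summable_bits ω _) summable_half_pow
  intro n
  gcongr
  exact bitAt_le_one _ _

lemma unifAt_lt_one {ω : ℝ} {k : ℕ} (h : ∃ n, bitAt ω (Nat.pair k n) = 0) :
    unifAt ω k < 1 := by
  obtain ⟨n₀, hn₀⟩ := h
  have hsum1 := summable_half_pow
  have hsum2 := summable_bits ω (Nat.pair k)
  have hsub : ∑' n : ℕ, ((1:ℝ) / 2 ^ (n + 1) - bitAt ω (Nat.pair k n) / 2 ^ (n + 1))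
      = 1 - unifAt ω k := by
    rw [Summable.tsum_sub hsum1 hsum2, tsum_half_pow]
    rfl
  have hterm : (1:ℝ) / 2 ^ (n₀ + 1)
      ≤ ∑' n : ℕ, ((1:ℝ) / 2 ^ (n + 1) - bitAt ω (Nat.pair k n) / 2 ^ (n + 1)) := by
    have hpos : ∀ n, 0 ≤ (1:ℝ) / 2 ^ (n + 1) - bitAt ω (Nat.pair k n) / 2 ^ (n + 1) := by
      intro n
      have : bitAt ω (Nat.pair k n) / 2 ^ (n + 1) ≤ 1 / 2 ^ (n + 1) := by
        gcongr
        exact bitAt_le_one _ _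
      linarith
    have := Summable.le_tsum (hsum1.sub hsum2) n₀ fun j _ => hpos j
    calc (1:ℝ) / 2 ^ (n₀ + 1)
        = 1 / 2 ^ (n₀ + 1) - bitAt ω (Nat.pair k n₀) / 2 ^ (n₀ + 1) := by rw [hn₀]; ring
      _ ≤ _ := this
  rw [hsub] at hterm
  have : (0:ℝ) < 1 / 2 ^ (n₀ + 1) := by positivity
  linarith

/-- binary digits of a natural number -/
lemma nat_bits (q : ℕ) : ∀ j : ℕ, j < 2 ^ q →
    ∑ r ∈ Finset.range q, (j / 2 ^ r % 2) * 2 ^ r = j := by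
  induction q with
  | zero => intro j hj; interval_cases j <;> simp
  | succ q ih =>
    intro j hj
    rw [Finset.sum_range_succ']
    have hterm : ∀ r : ℕ, j / 2 ^ (r + 1) % 2 * 2 ^ (r + 1) = 2 * (j / 2 / 2 ^ r % 2 * 2 ^ r) := by
      intro r
      have h1 : j / 2 ^ (r + 1) = j / 2 / 2 ^ r := by
        rw [Nat.div_div_eq_div_mul, pow_succ']
      rw [h1, pow_succ']
      ring
    rw [Finset.sum_congr rfl fun r _ => hterm r, ← Finset.mul_sum]
    have hj2 : j / 2 < 2 ^ q := by
      have h2 : j < 2 ^ q * 2 := by rw [← pow_succ]; exact hj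
      omega
    rw [ih (j / 2) hj2]
    simp
    omega

lemma nat_bits_real (q j : ℕ) (hj : j < 2 ^ q) :
    ∑ n ∈ Finset.range q, ((j / 2 ^ (q - 1 - n) % 2 : ℕ) : ℝ) / 2 ^ (n + 1)
      = (j : ℝ) / 2 ^ q := by
  have hrefl := Finset.sum_range_reflect
    (fun r => ((j / 2 ^ r % 2 : ℕ) : ℝ) / 2 ^ (q - r)) q
  have hterm : ∀ n ∈ Finset.range q,
      ((j / 2 ^ (q - 1 - n) % 2 : ℕ) : ℝ) / 2 ^ (n + 1)
        = ((j / 2 ^ (q - 1 - n) % 2 : ℕ) : ℝ) / 2 ^ (q - (q - 1 - n)) := by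
    intro n hn
    rw [Finset.mem_range] at hn
    congr 2
    omega
  rw [Finset.sum_congr rfl hterm, hrefl]
  have hterm2 : ∀ r ∈ Finset.range q,
      ((j / 2 ^ r % 2 : ℕ) : ℝ) / 2 ^ (q - r)
        = ((j / 2 ^ r % 2 * 2 ^ r : ℕ) : ℝ) / 2 ^ q := by
    intro r hr
    rw [Finset.mem_range] at hr
    push_cast
    rw [div_eq_div_iff (by positivity) (by positivity)]
    rw [mul_assoc, ← pow_add]
    congr 2
    omega
  rw [Finset.sum_congr rfl hterm2, ← Finset.sum_div]
  congr 1
  rw [← Nat.cast_sum]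
  rw [nat_bits q j hj]

end Unif

section Unif2

open Topology MeasureTheory

lemma unifAt_sandwich (ω : ℝ) (k q : ℕ) (d : ℕ → ℕ)
    (h : ∀ n < q, bitAt ω (Nat.pair k n) = (d n : ℝ)) :
    (∑ n ∈ Finset.range q, (d n : ℝ) / 2 ^ (n + 1)) ≤ unifAt ω k ∧
      unifAt ω k ≤ (∑ n ∈ Finset.range q, (d n : ℝ) / 2 ^ (n + 1)) + 1 / 2 ^ q := by
  have hsum := summable_bits ω (Nat.pair k)
  have hsplit := (Summable.sum_add_tsum_nat_add (f := fun n => bitAt ω (Nat.pair k n) / 2 ^ (n + 1)) q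
    hsum).symm
  have hhead : ∑ n ∈ Finset.range q, bitAt ω (Nat.pair k n) / 2 ^ (n + 1)
      = ∑ n ∈ Finset.range q, (d n : ℝ) / 2 ^ (n + 1) := by
    refine Finset.sum_congr rfl fun n hn => ?_
    rw [Finset.mem_range] at hn
    rw [h n hn]
  have htail0 : 0 ≤ ∑' n : ℕ, bitAt ω (Nat.pair k (n + q)) / 2 ^ (n + q + 1) :=
    tsum_nonneg fun n => div_nonneg (bitAt_nonneg _ _) (by positivity)
  have htail1 : ∑' n : ℕ, bitAt ω (Nat.pair k (n + q)) / 2 ^ (n + q + 1) ≤ 1 / 2 ^ q := by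
    have hle : ∀ n : ℕ, bitAt ω (Nat.pair k (n + q)) / 2 ^ (n + q + 1)
        ≤ (1 / 2 ^ q) * (1 / 2 ^ (n + 1)) := by
      intro n
      rw [div_mul_div_comm, one_mul, ← pow_add]
      have harith : q + (n + 1) = n + q + 1 := by omega
      rw [harith]
      gcongr
      exact bitAt_le_one _ _
    have hs2 : Summable fun n : ℕ => (1 / 2 ^ q : ℝ) * (1 / 2 ^ (n + 1)) :=
      summable_half_pow.mul_left _
    calc ∑' n : ℕ, bitAt ω (Nat.pair k (n + q)) / 2 ^ (n + q + 1)
        ≤ ∑' n : ℕ, (1 / 2 ^ q : ℝ) * (1 / 2 ^ (n + 1)) := by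
          apply Summable.tsum_le_tsum hle _ hs2
          exact (hsum.comp_injective (add_left_injective q)).congr fun n => rfl
      _ = 1 / 2 ^ q := by rw [tsum_mul_left, tsum_half_pow, mul_one]
  have hunif : unifAt ω k = ∑ n ∈ Finset.range q, (d n : ℝ) / 2 ^ (n + 1)
      + ∑' n : ℕ, bitAt ω (Nat.pair k (n + q)) / 2 ^ (n + q + 1) := by
    unfold unifAt
    rw [hsplit, hhead]
  constructor
  · rw [hunif]; linarith
  · rw [hunif]; linarith

lemma volume_allOnes (k : ℕ) :
    volume (Set.Ico (0:ℝ) 1 ∩ {ω : ℝ | ∀ n : ℕ, bitAt ω (Nat.pair k n) = 1}) = 0 := by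
  have hpair_inj : Function.Injective (Nat.pair k) := by
    intro a b hab
    have := congrArg Nat.unpair hab
    simpa [Nat.unpair_pair] using this
  have hbound : ∀ N : ℕ,
      volume (Set.Ico (0:ℝ) 1 ∩ {ω : ℝ | ∀ n : ℕ, bitAt ω (Nat.pair k n) = 1})
        ≤ (1/2 : ENNReal) ^ N := by
    intro N
    have hsub : Set.Ico (0:ℝ) 1 ∩ {ω : ℝ | ∀ n : ℕ, bitAt ω (Nat.pair k n) = 1}
        ⊆ Set.Ico (0:ℝ) 1 ∩
          {ω : ℝ | ∀ p ∈ (Finset.range N).image (Nat.pair k), bitAt ω p = (fun _ => (1:ℝ)) p} := by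
      rintro ω ⟨h1, h2⟩
      refine ⟨h1, fun p hp => ?_⟩
      rw [Finset.mem_image] at hp
      obtain ⟨n, _, rfl⟩ := hp
      exact h2 n
    calc volume _ ≤ volume (Set.Ico (0:ℝ) 1 ∩
          {ω : ℝ | ∀ p ∈ (Finset.range N).image (Nat.pair k), bitAt ω p = (fun _ => (1:ℝ)) p}) :=
            measure_mono hsub
      _ = (1/2 : ENNReal) ^ ((Finset.range N).image (Nat.pair k)).card :=
          volume_bitSet _ _ (fun _ => Or.inr rfl)
      _ = (1/2 : ENNReal) ^ N := by
          rw [Finset.card_image_of_injective _ hpair_inj, Finset.card_range]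
  have htend : Tendsto (fun N : ℕ => (1/2 : ENNReal) ^ N) atTop (𝓝 0) :=
    ENNReal.tendsto_pow_atTop_nhds_zero_of_lt_one (by norm_num)
  exact le_antisymm (ge_of_tendsto' htend hbound) zero_le

end Unif2

section Step

variable {S : Type*} [Fintype S] [Nonempty S] {P : S → S → ℝ}

lemma stepFun_eq (s t : S) (x : ℝ) (hP : IsStochastic P)
    (h1 : ∑ j ∈ Finset.Iio ((Fintype.equivFin S) t), P s ((Fintype.equivFin S).symm j) ≤ x)
    (h2 : x < ∑ j ∈ Finset.Iic ((Fintype.equivFin S) t), P s ((Fintype.equivFin S).symm j)) :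
    stepFun P s x = t := by
  classical
  set e := Fintype.equivFin S with he
  have hex : ∃ k, x < ∑ j ∈ Finset.Iic k, P s (e.symm j) := ⟨e t, h2⟩
  have hsome : (@Fin.find _ (fun i => x < ∑ j ∈ Finset.Iic i, P s (e.symm j))
      (Classical.decPred _) hex) = e t := by
    rw [Fin.find_eq_iff]
    refine ⟨h2, fun j hji hj => ?_⟩
    have hsub : Finset.Iic j ⊆ Finset.Iio (e t) := fun a ha => by
      rw [Finset.mem_Iic] at ha
      rw [Finset.mem_Iio]
      exact lt_of_le_of_lt ha hji
    have : ∑ j' ∈ Finset.Iic j, P s (e.symm j') ≤ ∑ j' ∈ Finset.Iio (e t), P s (e.symm j') :=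
      Finset.sum_le_sum_of_subset_of_nonneg hsub fun a _ _ => hP.1 s (e.symm a)
    linarith
  unfold stepFun
  rw [← he, dif_pos hex, hsome]
  simp

lemma stepFun_pos (s : S) {x : ℝ} (hP : IsStochastic P) (hx0 : 0 ≤ x) (hx1 : x < 1) :
    0 < P s (stepFun P s x) := by
  classical
  set e := Fintype.equivFin S with he
  set p : Fin (Fintype.card S) → Prop := fun i => x < ∑ j ∈ Finset.Iic i, P s (e.symm j) with hp
  have hcard : 0 < Fintype.card S := Fintype.card_pos
  have hex : ∃ i, p i := by
    refine ⟨⟨Fintype.card S - 1, by omega⟩, ?_⟩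
    have huniv : Finset.Iic (⟨Fintype.card S - 1, by omega⟩ : Fin (Fintype.card S))
        = Finset.univ := by
      ext a
      simp only [Finset.mem_Iic, Finset.mem_univ, iff_true, Fin.le_def]
      have := a.isLt
      omega
    rw [hp]
    simp only [huniv]
    have htot : ∑ j : Fin (Fintype.card S), P s (e.symm j) = 1 := by
      rw [Equiv.sum_comp e.symm (fun s' => P s s')]
      exact hP.2 s
    rw [htot]
    exact hx1
  set i := @Fin.find _ p (Classical.decPred _) hex with hi
  have hpi : p i := @Fin.find_spec _ p (Classical.decPred _) hex
  have hmin : ∀ j < i, ¬ p j := fun j hj => @Fin.find_min _ p (Classical.decPred _) hex j hj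
  have hstep : stepFun P s x = e.symm i := by
    unfold stepFun
    rw [← he, dif_pos hex]
  rw [hstep]
  have hsplit : ∑ j ∈ Finset.Iic i, P s (e.symm j)
      = P s (e.symm i) + ∑ j ∈ Finset.Iio i, P s (e.symm j) := by
    rw [← Finset.Iio_insert, Finset.sum_insert (by simp)]
  have hIio : ∑ j ∈ Finset.Iio i, P s (e.symm j) ≤ x := by
    rcases Nat.eq_zero_or_pos i.val with h0 | hposi
    · have : Finset.Iio i = ∅ := by
        ext a
        simp only [Finset.mem_Iio, Finset.notMem_empty, iff_false, Fin.lt_def, h0]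
        omega
      rw [this]
      simpa using hx0
    · set j : Fin (Fintype.card S) := ⟨i.val - 1, by have := i.isLt; omega⟩ with hj
      have hji : j < i := by rw [Fin.lt_def]; show i.val - 1 < i.val; omega
      have hnpj : ¬ p j := hmin j hji
      have hIioIic : Finset.Iio i = Finset.Iic j := by
        ext a
        simp only [Finset.mem_Iio, Finset.mem_Iic, Fin.lt_def, Fin.le_def, hj]
        omega
      rw [hIioIic]
      exact not_lt.mp hnpj
  have hx : x < ∑ j ∈ Finset.Iic i, P s (e.symm j) := hpi
  rw [hsplit] at hx
  linarith

end Step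

section Meas

open Topology MeasureTheory

lemma measurable_unifAt (k : ℕ) : Measurable fun ω : ℝ => unifAt ω k := by
  have hpart : ∀ N : ℕ, Measurable fun ω : ℝ =>
      ∑ n ∈ Finset.range N, bitAt ω (Nat.pair k n) / 2 ^ (n + 1) :=
    fun N => Finset.measurable_sum _ fun n _ => (measurable_bitAt _).div_const _
  apply measurable_of_tendsto_metrizable hpart
  rw [tendsto_pi_nhds]
  intro ω
  exact (summable_bits ω (Nat.pair k)).hasSum.tendsto_sum_nat

variable {S : Type*} [Fintype S] [Nonempty S] {P : S → S → ℝ}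

lemma measurable_findStep {S : Type*} [MeasurableSpace S] {n : ℕ} (hn : 0 < n)
    (F : Fin n → ℝ) (g : Fin n → S) :
    Measurable (fun x : ℝ =>
      g (@dite _ (∃ k, x < F k) (Classical.propDecidable _)
        (fun h => @Fin.find _ (fun i => x < F i) (Classical.decPred _) h) (fun _ => ⟨0, hn⟩))) := by
  classical
  intro A _
  let f : ℝ → Fin n := fun x => @dite _ (∃ k, x < F k) (Classical.propDecidable _)
      (fun h => @Fin.find _ (fun i => x < F i) (Classical.decPred _) h) (fun _ => ⟨0, hn⟩)
  have hE : MeasurableSet {x : ℝ | ∃ k, x < F k} := by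
    have : {x : ℝ | ∃ k, x < F k} = ⋃ k, Set.Iio (F k) := by ext; simp
    rw [this]; exact MeasurableSet.iUnion fun k => measurableSet_Iio
  have hfind : ∀ i : Fin n, MeasurableSet {x : ℝ | f x = i} := by
    intro i
    have hset : {x : ℝ | f x = i} = ({x : ℝ | ∃ k, x < F k} ∩ (Set.Iio (F i) ∩
        ⋂ j : Fin n, ({_x : ℝ | ¬ j < i} ∪ Set.Ici (F j)))) ∪
        ({x : ℝ | ∃ k, x < F k}ᶜ ∩ {_x : ℝ | i = ⟨0, hn⟩}) := by
      ext x
      by_cases h : ∃ k, x < F k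
      · have hfx : f x = @Fin.find _ (fun i => x < F i) (Classical.decPred _) h := dif_pos h
        rw [Set.mem_setOf_eq, hfx, Fin.find_eq_iff]
        simp only [Set.mem_union, Set.mem_inter_iff, Set.mem_setOf_eq, Set.mem_Iio,
          Set.mem_iInter, Set.mem_Ici, Set.mem_compl_iff, h, true_and, not_true_eq_false,
          false_and, or_false, not_lt]
        constructor
        · rintro ⟨h1, h2⟩
          exact ⟨h1, fun j => (le_or_gt i j).elim Or.inl (fun hj => Or.inr (h2 j hj))⟩
        · rintro ⟨h1, h2⟩
          exact ⟨h1, fun j hj => (h2 j).resolve_left (not_le.mpr hj)⟩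
      · have hfx : f x = ⟨0, hn⟩ := dif_neg h
        rw [Set.mem_setOf_eq, hfx]
        simp only [Set.mem_union, Set.mem_inter_iff, Set.mem_setOf_eq, Set.mem_compl_iff, h,
          false_and, false_or, not_false_eq_true, true_and]
        exact eq_comm
    rw [hset]
    exact (hE.inter (measurableSet_Iio.inter (MeasurableSet.iInter fun j =>
      (MeasurableSet.const _).union measurableSet_Ici))).union (hE.compl.inter (MeasurableSet.const _))
  have hpre : (fun x : ℝ => g (f x)) ⁻¹' A = ⋃ (i : Fin n) (_ : g i ∈ A), {x : ℝ | f x = i} := by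
    ext x
    simp only [Set.mem_preimage, Set.mem_iUnion, Set.mem_setOf_eq]
    exact ⟨fun hx => ⟨_, hx, rfl⟩, fun ⟨i, hi, hfi⟩ => hfi ▸ hi⟩
  show MeasurableSet ((fun x : ℝ => g (f x)) ⁻¹' A)
  rw [hpre]
  exact MeasurableSet.iUnion fun i => MeasurableSet.iUnion fun _ => hfind i

lemma measurable_stepFun (s : S) : @Measurable ℝ S _ ⊤ (fun x => stepFun P s x) := by
  unfold stepFun
  exact @measurable_findStep S ⊤ _ Fintype.card_pos
    (fun i => ∑ j ∈ Finset.Iic i, P s ((Fintype.equivFin S).symm j))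
    (Fintype.equivFin S).symm

lemma measurable_trajFun_coord (s0 : S) (k : ℕ) :
    @Measurable ℝ S _ ⊤ (fun ω => trajFun P s0 ω k) := by
  classical
  induction k with
  | zero => exact @measurable_const S ℝ ⊤ _ s0
  | succ k ih =>
    intro A _
    have hpre : (fun ω => trajFun P s0 ω (k + 1)) ⁻¹' A
        = ⋃ u : S, ((fun ω => trajFun P s0 ω k) ⁻¹' {u})
            ∩ ((fun ω => unifAt ω k) ⁻¹' {x : ℝ | stepFun P u x ∈ A}) := by
      ext ω
      simp only [Set.mem_preimage, Set.mem_iUnion, Set.mem_inter_iff, Set.mem_singleton_iff,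
        Set.mem_setOf_eq]
      constructor
      · intro hω
        exact ⟨trajFun P s0 ω k, rfl, hω⟩
      · rintro ⟨u, hu, hω⟩
        show stepFun P (trajFun P s0 ω k) (unifAt ω k) ∈ A
        rw [hu]
        exact hω
    rw [hpre]
    refine MeasurableSet.iUnion fun u => MeasurableSet.inter ?_ ?_
    · exact ih (MeasurableSpace.measurableSet_top)
    · exact (measurable_unifAt k) (measurable_stepFun u (MeasurableSpace.measurableSet_top))

lemma measurable_trajFun (s0 : S) :
    @Measurable ℝ (ℕ → S) _ (@MeasurableSpace.pi ℕ (fun _ => S) (fun _ => ⊤))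
      (trajFun P s0) := by
  apply @measurable_pi_lambda ℝ ℕ (fun _ => S) _ (fun _ => ⊤) (trajFun P s0)
  exact fun k => measurable_trajFun_coord s0 k

lemma chainLaw_apply (s0 : S) (A : Set (ℕ → S))
    (hA : MeasurableSet[@MeasurableSpace.pi ℕ (fun _ => S) (fun _ => ⊤)] A) :
    chainLaw P s0 A = volume (trajFun P s0 ⁻¹' A ∩ Set.Ico (0:ℝ) 1) := by
  unfold chainLaw
  rw [MeasureTheory.Measure.map_apply (measurable_trajFun s0) hA]
  rw [MeasureTheory.Measure.restrict_apply' measurableSet_Ico]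

lemma measurable_returnSet (s : S) :
    MeasurableSet[@MeasurableSpace.pi ℕ (fun _ => S) (fun _ => ⊤)]
      {x : ℕ → S | ∃ k ≥ 1, x k = s} := by
  have hset : {x : ℕ → S | ∃ k ≥ 1, x k = s}
      = ⋃ (k : ℕ) (_ : k ≥ 1), (fun x : ℕ → S => x k) ⁻¹' {s} := by
    ext x; simp
  rw [hset]
  refine MeasurableSet.iUnion fun k => MeasurableSet.iUnion fun _ => ?_
  have h1 : @Measurable (ℕ → S) S (@MeasurableSpace.pi ℕ (fun _ => S) (fun _ => ⊤)) ⊤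
      (fun x : ℕ → S => x k) := @measurable_pi_apply ℕ (fun _ => S) (fun _ => ⊤) k
  exact h1 (MeasurableSpace.measurableSet_top)

end Meas

section ReachBack

open Topology MeasureTheory

variable {S : Type*} [Fintype S] [Nonempty S] [DecidableEq S] {P : S → S → ℝ}

lemma reach_back (hP : IsStochastic P) (s : S) (hs : Recurrent P s) (t : S)
    (ht : Reachable P s t) : Reachable P t s := by
  classical
  by_contra hback
  have hsB : Reachable P s s := reachable_refl s
  have htne : t ≠ s := by rintro rfl; exact hback hsB
  obtain ⟨n, hn⟩ := ht
  obtain ⟨u, hu0, hun, hustep⟩ := exists_path hP hn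
  -- last visit to `s` along the path
  set I : Finset ℕ := (Finset.range (n + 1)).filter (fun i => u i = s) with hI
  have hI0 : 0 ∈ I := by
    rw [hI, Finset.mem_filter, Finset.mem_range]
    exact ⟨by omega, hu0⟩
  have hIne : I.Nonempty := ⟨0, hI0⟩
  set i₀ := I.max' hIne with hi₀
  have hi₀mem : i₀ ∈ I := I.max'_mem hIne
  rw [hI, Finset.mem_filter, Finset.mem_range] at hi₀mem
  have hui₀ : u i₀ = s := hi₀mem.2
  have hi₀le : i₀ ≤ n := by omega
  have hi₀max : ∀ i, i₀ < i → i ≤ n → u i ≠ s := by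
    intro i h1 h2 hui
    have : i ∈ I := by
      rw [hI, Finset.mem_filter, Finset.mem_range]
      exact ⟨by omega, hui⟩
    have := I.le_max' i this
    omega
  have hi₀n : i₀ < n := by
    rcases eq_or_lt_of_le hi₀le with h | h
    · exfalso
      apply htne
      rw [← hun, ← h, hui₀]
    · exact h
  set m := n - i₀ with hm
  have hm1 : 1 ≤ m := by omega
  set v : ℕ → S := fun j => u (i₀ + j) with hv
  have hv0 : v 0 = s := hui₀
  have hvm : v m = t := by
    rw [hv]
    simp only
    rw [show i₀ + m = n by omega, hun]
  have hvstep : ∀ j < m, 0 < P (v j) (v (j + 1)) := by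
    intro j hj
    have := hustep (i₀ + j) (by omega)
    rw [hv]
    simp only
    rw [show i₀ + (j + 1) = i₀ + j + 1 by omega]
    exact this
  have hvne : ∀ j, 1 ≤ j → j ≤ m → v j ≠ s := fun j h1 h2 =>
    hi₀max (i₀ + j) (by omega) (by omega)
  have htB : ¬ Reachable P t s := hback
  have hBstep : ∀ w, ¬ Reachable P w s → ∀ w', 0 < P w w' → ¬ Reachable P w' s :=
    fun w hw w' hpos h' => hw (reachable_trans hP (reachable_of_pos hpos) h')
  -- cdf interval endpoints
  set e := Fintype.equivFin S with he
  set a : ℕ → ℝ := fun k => ∑ j ∈ Finset.Iio (e (v (k + 1))), P (v k) (e.symm j) with ha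
  set b : ℕ → ℝ := fun k => ∑ j ∈ Finset.Iic (e (v (k + 1))), P (v k) (e.symm j) with hb
  have hab : ∀ k, b k = P (v k) (v (k + 1)) + a k := by
    intro k
    rw [hb, ha]
    simp only
    rw [← Finset.Iio_insert, Finset.sum_insert (by simp), Equiv.symm_apply_apply]
  have ha0 : ∀ k, 0 ≤ a k := fun k =>
    Finset.sum_nonneg fun j _ => hP.1 _ _
  have hb1 : ∀ k, b k ≤ 1 := by
    intro k
    have h1 : b k ≤ ∑ j : Fin (Fintype.card S), P (v k) (e.symm j) :=
      Finset.sum_le_sum_of_subset_of_nonneg (Finset.subset_univ _) fun j _ _ => hP.1 _ _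
    have h2 : ∑ j : Fin (Fintype.card S), P (v k) (e.symm j) = 1 := by
      rw [Equiv.sum_comp e.symm (fun s' => P (v k) s')]
      exact hP.2 (v k)
    linarith
  -- choose the dyadic resolution q
  have hδex : ∃ δ > 0, ∀ k < m, δ ≤ P (v k) (v (k + 1)) := by
    have hne : ((Finset.range m).image (fun k => P (v k) (v (k + 1)))).Nonempty :=
      (Finset.nonempty_range_iff.mpr (by omega)).image _
    refine ⟨((Finset.range m).image (fun k => P (v k) (v (k + 1)))).min' hne, ?_, ?_⟩
    · obtain ⟨k, hk, hkeq⟩ := Finset.mem_image.mp (Finset.min'_mem _ hne)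
      rw [← hkeq]
      exact hvstep k (Finset.mem_range.mp hk)
    · intro k hk
      exact Finset.min'_le _ _ (Finset.mem_image_of_mem _ (Finset.mem_range.mpr hk))
  obtain ⟨δ, hδpos, hδle⟩ := hδex
  obtain ⟨q, hq⟩ : ∃ q : ℕ, (1/2 : ℝ) ^ q < δ / 2 :=
    exists_pow_lt_of_lt_one (by positivity) (by norm_num)
  have h2pos : (0:ℝ) < 2 ^ q := by positivity
  have hfact : (1/2 : ℝ) ^ q * 2 ^ q = 1 := by
    rw [div_pow, one_pow, div_mul_cancel₀]
    exact ne_of_gt h2pos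
  have hq2 : ∀ k < m, 2 * (1/2 : ℝ) ^ q < P (v k) (v (k + 1)) := by
    intro k hk
    have := hδle k hk
    linarith
  -- dyadic approximation of a k from above
  have hfloor_nonneg : ∀ k : ℕ, 0 ≤ ⌊a k * 2 ^ q⌋ := fun k =>
    Int.floor_nonneg.mpr (mul_nonneg (ha0 k) (le_of_lt h2pos))
  set jn : ℕ → ℕ := fun k => (⌊a k * 2 ^ q⌋ + 1).toNat with hjn
  have hjcast : ∀ k, (jn k : ℝ) = (⌊a k * 2 ^ q⌋ : ℝ) + 1 := by
    intro k
    have h1 : ((⌊a k * 2 ^ q⌋ + 1).toNat : ℤ) = ⌊a k * 2 ^ q⌋ + 1 :=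
      Int.toNat_of_nonneg (by have := hfloor_nonneg k; omega)
    rw [hjn]
    exact_mod_cast congrArg (Int.cast : ℤ → ℝ) h1
  have hkey : ∀ k < m, a k < (jn k : ℝ) / 2 ^ q ∧ (jn k : ℝ) / 2 ^ q + 1 / 2 ^ q < b k := by
    intro k hk
    have hfl := Int.lt_floor_add_one (a k * 2 ^ q)
    have hfl2 := Int.floor_le (a k * 2 ^ q)
    constructor
    · rw [lt_div_iff₀ h2pos, hjcast k]
      linarith
    · have hub : (jn k : ℝ) ≤ a k * 2 ^ q + 1 := by
        rw [hjcast k]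
        linarith
      have hPk := hq2 k hk
      have habk := hab k
      rw [← add_div, div_lt_iff₀ h2pos]
      nlinarith
  have hjlt : ∀ k < m, jn k < 2 ^ q := by
    intro k hk
    have h2 := (hkey k hk).2
    have hb1k := hb1 k
    rw [← add_div] at h2
    have h3 : ((jn k : ℝ) + 1) / 2 ^ q < 1 := lt_of_lt_of_le h2 hb1k
    rw [div_lt_one h2pos] at h3
    have : (jn k : ℝ) < ((2 ^ q : ℕ) : ℝ) := by
      push_cast
      linarith
    exact_mod_cast this
  set d : ℕ → ℕ → ℕ := fun k nn => jn k / 2 ^ (q - 1 - nn) % 2 with hd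
  have hcsum : ∀ k < m, ∑ nn ∈ Finset.range q, (d k nn : ℝ) / 2 ^ (nn + 1)
      = (jn k : ℝ) / 2 ^ q := fun k hk => nat_bits_real q (jn k) (hjlt k hk)
  -- the positive-measure event
  set Pos : Finset ℕ :=
    (Finset.range m ×ˢ Finset.range q).image (fun kn => Nat.pair kn.1 kn.2) with hPos
  set ε : ℕ → ℝ := fun pp => (d (Nat.unpair pp).1 (Nat.unpair pp).2 : ℝ) with hε
  have hεval : ∀ pp, ε pp = 0 ∨ ε pp = 1 := by
    intro pp
    rcases Nat.mod_two_eq_zero_or_one (jn (Nat.unpair pp).1 / 2 ^ (q - 1 - (Nat.unpair pp).2))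
      with h | h
    · left; rw [hε]; simp only [hd]; rw [h]; norm_num
    · right; rw [hε]; simp only [hd]; rw [h]; norm_num
  set W := Set.Ico (0:ℝ) 1 ∩ {ω : ℝ | ∀ pp ∈ Pos, bitAt ω pp = ε pp} with hW
  have hWvol : volume W = (1/2 : ENNReal) ^ Pos.card := volume_bitSet Pos ε hεval
  set Z := ⋃ k : ℕ, (Set.Ico (0:ℝ) 1 ∩ {ω : ℝ | ∀ nn : ℕ, bitAt ω (Nat.pair k nn) = 1})
    with hZ
  have hZvol : volume Z = 0 := measure_iUnion_null fun k => volume_allOnes k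
  have hGvol : volume (W \ Z) = (1/2 : ENNReal) ^ Pos.card := by
    rw [measure_diff_null hZvol]
    exact hWvol
  -- trajectories driven by ω ∈ W \ Z never return to s
  have htrajprop : ∀ ω ∈ W \ Z, ∀ k, 1 ≤ k → trajFun P s ω k ≠ s := by
    intro ω hω
    obtain ⟨hωW, hωZ⟩ := hω
    obtain ⟨hωIco, hωbits⟩ := hωW
    have hunif01 : ∀ k, 0 ≤ unifAt ω k ∧ unifAt ω k < 1 := by
      intro k
      refine ⟨unifAt_nonneg ω k, ?_⟩
      apply unifAt_lt_one
      by_contra hall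
      push_neg at hall
      apply hωZ
      rw [hZ]
      refine Set.mem_iUnion.mpr ⟨k, hωIco, fun nn => ?_⟩
      rcases bitAt_zero_or_one ω (Nat.pair k nn) with h0 | h1
      · exact absurd h0 (hall nn)
      · exact h1
    have hbits : ∀ k < m, ∀ nn < q, bitAt ω (Nat.pair k nn) = (d k nn : ℝ) := by
      intro k hk nn hnn
      have hmem : Nat.pair k nn ∈ Pos := Finset.mem_image.mpr
        ⟨(k, nn), Finset.mem_product.mpr
          ⟨Finset.mem_range.mpr hk, Finset.mem_range.mpr hnn⟩, rfl⟩
      have := hωbits _ hmem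
      rw [this, hε]
      simp [Nat.unpair_pair]
    have hstep : ∀ k < m, stepFun P (v k) (unifAt ω k) = v (k + 1) := by
      intro k hk
      obtain ⟨hs1, hs2⟩ := unifAt_sandwich ω k q (d k) (hbits k hk)
      rw [hcsum k hk] at hs1 hs2
      obtain ⟨hk1, hk2⟩ := hkey k hk
      refine stepFun_eq _ _ _ hP ?_ ?_
      · show a k ≤ unifAt ω k
        linarith
      · show unifAt ω k < b k
        linarith
    have htraj : ∀ k ≤ m, trajFun P s ω k = v k := by
      intro k
      induction k with
      | zero =>
        intro _
        rw [show trajFun P s ω 0 = s from rfl, hv0]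
      | succ k ih =>
        intro hk1
        have hkm : k < m := by omega
        rw [show trajFun P s ω (k + 1) = stepFun P (trajFun P s ω k) (unifAt ω k) from rfl,
          ih (by omega), hstep k hkm]
    have hafter : ∀ k, m ≤ k → ¬ Reachable P (trajFun P s ω k) s := by
      intro k
      induction k with
      | zero =>
        intro h0
        exact absurd h0 (by omega)
      | succ k ih =>
        intro hk
        rcases Nat.lt_or_ge k m with hkm | hkm
        · have hkm1 : k + 1 = m := by omega
          rw [htraj (k + 1) (by omega), hkm1, hvm]
          exact htB
        · have hB := ih hkm
          rw [show trajFun P s ω (k + 1) = stepFun P (trajFun P s ω k) (unifAt ω k) from rfl]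
          exact hBstep _ hB _ (stepFun_pos _ hP (hunif01 k).1 (hunif01 k).2)
    intro k hk1
    rcases le_or_gt k m with hkm | hkm
    · rw [htraj k hkm]
      exact hvne k hk1 hkm
    · intro heq
      apply hafter k (by omega)
      rw [heq]
      exact hsB
  -- measure-theoretic contradiction
  have hE := measurable_returnSet (S := S) s
  have htot : chainLaw P s Set.univ = 1 := by
    rw [chainLaw_apply (P := P) s Set.univ MeasurableSet.univ]
    simp [Real.volume_Ico]
  have hrec : chainLaw P s {x : ℕ → S | ∃ k ≥ 1, x k = s} = 1 := hs
  have hcompl : chainLaw P s ({x : ℕ → S | ∃ k ≥ 1, x k = s}ᶜ) = 0 := by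
    rw [measure_compl hE (by rw [hrec]; exact ENNReal.one_ne_top), htot, hrec, tsub_self]
  have hle : volume (W \ Z) ≤ chainLaw P s ({x : ℕ → S | ∃ k ≥ 1, x k = s}ᶜ) := by
    rw [chainLaw_apply (P := P) s _ hE.compl]
    apply measure_mono
    intro ω hω
    refine ⟨?_, hω.1.1⟩
    simp only [Set.mem_preimage, Set.mem_compl_iff, Set.mem_setOf_eq]
    rintro ⟨k, hk1, hks⟩
    exact htrajprop ω hω k hk1 hks
  rw [hcompl, hGvol] at hle
  have hzero : (1/2 : ENNReal) ^ Pos.card = 0 := le_antisymm hle zero_le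
  exact (pow_ne_zero _ (by norm_num : (1/2 : ENNReal) ≠ 0)) hzero

end ReachBack

section Final

variable {S : Type*} [Fintype S] [DecidableEq S] {P : S → S → ℝ}

lemma stationary_pow (hP : IsStochastic P) {π : S → ℝ}
    (hstat : ∀ t' : S, ∑ t : S, π t * P t t' = π t') :
    ∀ (n : ℕ) (t' : S), ∑ t : S, π t * (Matrix.of P ^ n) t t' = π t' := by
  intro n
  induction n with
  | zero =>
    intro t'
    simp only [pow_zero, Matrix.one_apply]
    rw [Finset.sum_congr rfl fun t _ => by
      rw [mul_ite, mul_one, mul_zero]]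
    rw [Finset.sum_ite_eq' Finset.univ t' π]
    simp
  | succ n ih =>
    intro t'
    simp only [pow_succ, Matrix.mul_apply]
    have h1 : ∀ t : S, π t * (∑ c : S, (Matrix.of P ^ n) t c * Matrix.of P c t')
        = ∑ c : S, π t * (Matrix.of P ^ n) t c * Matrix.of P c t' := by
      intro t
      rw [Finset.mul_sum]
      exact Finset.sum_congr rfl fun c _ => by ring
    rw [Finset.sum_congr rfl fun t _ => h1 t, Finset.sum_comm]
    have h2 : ∀ c : S, ∑ t : S, π t * (Matrix.of P ^ n) t c * Matrix.of P c t'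
        = π c * P c t' := by
      intro c
      rw [← Finset.sum_mul, ih c]
      rfl
    rw [Finset.sum_congr rfl fun c _ => h2 c]
    exact hstat t'
end Final

/-- A recurrent state lies in the support of some stationary pmf, whose support consists of
states reachable from it. -/
theorem stmt_6 {S : Type*} [Fintype S] [Nonempty S] [DecidableEq S]
    (P : S → S → ℝ) (hP : IsStochastic P) (s : S) (hs : Recurrent P s) :
    ∃ π : S → ℝ, IsPmf π ∧ (∀ t' : S, ∑ t : S, π t * P t t' = π t') ∧
      0 < π s ∧ ∀ t : S, 0 < π t → Reachable P s t := by
  obtain ⟨π, hpmf, hstat, hsupp⟩ := exists_stationary hP s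
  refine ⟨π, hpmf, hstat, ?_, hsupp⟩
  have hex : ∃ u, 0 < π u := by
    by_contra h
    push_neg at h
    have hle : ∑ a, π a ≤ 0 := Finset.sum_nonpos fun a _ => h a
    rw [hpmf.2] at hle
    linarith
  obtain ⟨u, hu⟩ := hex
  have hreach : Reachable P s u := hsupp u hu
  have hback : Reachable P u s := reach_back hP s hs u hreach
  obtain ⟨n, hn⟩ := hback
  have hstatn := stationary_pow hP hstat n s
  calc (0:ℝ) < π u * (Matrix.of P ^ n) u s := mul_pos hu hn
    _ ≤ ∑ t, π t * (Matrix.of P ^ n) t s :=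
      Finset.single_le_sum (f := fun t => π t * (Matrix.of P ^ n) t s)
        (fun t _ => mul_nonneg (hpmf.1 t) ((pow_stochastic hP n).1 t s))
        (Finset.mem_univ u)
    _ = π s := hstatn
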